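/- For every unweighted, connected simple graph G on n ≥ 2 vertices and every integer k with 2 ≤ k ≤ n, the k-way conductance satisfies φ_k(G) · diam(G) ≤ 24 · k · log n; that is, there exist k pairwise disjoint nonempty subsets S_1, …, S_k of the vertex set with φ(S_i) ≤ 24 · k · log n / diam(G) for every i, where log denotes the natural logarithm. -/

import Mathlib

open Finset Real

variable {V : Type*} [Fintype V] [DecidableEq V]

/-- The normalized Laplacian `I - D^{-1/2} A D^{-1/2}` of a simple graph. -/
noncomputable def normLap (G : SimpleGraph V) [DecidableRel G.Adj] : Matrix V V ℝ :=
  1 - Matrix.diagonal (fun v => (Real.sqrt (G.degree v))⁻¹) * G.adjMatrix ℝ *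
    Matrix.diagonal (fun v => (Real.sqrt (G.degree v))⁻¹)

lemma normLap_isHermitian (G : SimpleGraph V) [DecidableRel G.Adj] :
    (normLap G).IsHermitian := by
  unfold normLap
  apply Matrix.IsHermitian.sub (Matrix.isHermitian_one)
  rw [Matrix.IsHermitian, Matrix.conjTranspose_eq_transpose_of_trivial,
    Matrix.transpose_mul, Matrix.transpose_mul, Matrix.diagonal_transpose,
    G.transpose_adjMatrix, Matrix.mul_assoc]

/-- The `k`-th smallest eigenvalue (1-indexed) of the normalized Laplacian. -/
noncomputable def normLapEigenvalue (G : SimpleGraph V) [DecidableRel G.Adj]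
    (k : ℕ) (hk : k - 1 < Fintype.card V) : ℝ :=
  let f : Fin (Fintype.card V) → ℝ :=
    (normLap_isHermitian G).eigenvalues ∘ (Fintype.equivFin V).symm
  (f ∘ Tuple.sort f) ⟨k - 1, hk⟩

/-- Volume of a set of vertices: sum of degrees. -/
def vol (G : SimpleGraph V) [DecidableRel G.Adj] (S : Finset V) : ℕ :=
  ∑ v ∈ S, G.degree v

/-- Number of edges with exactly one endpoint in `S`. -/
def cut (G : SimpleGraph V) [DecidableRel G.Adj] (S : Finset V) : ℕ :=
  ((S ×ˢ Sᶜ).filter fun p => G.Adj p.1 p.2).card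

/-- Conductance of a set of vertices. -/
noncomputable def conductance (G : SimpleGraph V) [DecidableRel G.Adj] (S : Finset V) : ℝ :=
  (cut G S : ℝ) / min (vol G S) (vol G Sᶜ)

/-- Ball of radius `r` around a vertex in graph distance. -/
noncomputable def ball (G : SimpleGraph V) (v : V) (r : ℕ) : Finset V :=
  Finset.univ.filter fun u => G.dist v u ≤ r

/-- Set of vertices at distance at most `r` from a set `S`. -/
noncomputable def ballSet (G : SimpleGraph V) (S : Finset V) (r : ℕ) : Finset V :=
  Finset.univ.filter fun u => ∃ w ∈ S, G.dist w u ≤ r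

/-- Exterior neighborhood of `S`: vertices outside `S` adjacent to some vertex of `S`. -/
def nbhd (G : SimpleGraph V) [DecidableRel G.Adj] (S : Finset V) : Finset V :=
  Finset.univ.filter fun u => u ∉ S ∧ ∃ w ∈ S, G.Adj w u

/-- The `k`-way conductance `φ_k(G)`: the minimum, over all families of `k` pairwise
disjoint nonempty vertex subsets, of the largest conductance in the family. -/
noncomputable def phiK (G : SimpleGraph V) [DecidableRel G.Adj] (k : ℕ) : ℝ :=
  sInf {x | ∃ S : Fin k → Finset V, (∀ i, (S i).Nonempty) ∧
    Pairwise (Function.onFun Disjoint S) ∧ x = ⨆ i, conductance G (S i)}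

variable (G : SimpleGraph V) [DecidableRel G.Adj]

lemma vol_mono {S T : Finset V} (h : S ⊆ T) : vol G S ≤ vol G T :=
  Finset.sum_le_sum_of_subset h

lemma vol_add_compl (S : Finset V) : vol G S + vol G Sᶜ = vol G univ := by
  rw [vol, vol, vol, ← Finset.sum_union disjoint_compl_right, Finset.union_compl]

lemma cut_le_vol_of_mem {S T : Finset V}
    (hT : ∀ p ∈ (S ×ˢ Sᶜ).filter (fun p => G.Adj p.1 p.2), p.2 ∈ T) :
    cut G S ≤ vol G T := by
  rw [cut, Finset.card_eq_sum_card_fiberwise hT]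
  apply Finset.sum_le_sum
  intro b _
  have : ∀ p ∈ (((S ×ˢ Sᶜ).filter fun p => G.Adj p.1 p.2).filter fun p => p.2 = b),
      p.1 ∈ G.neighborFinset b := by
    intro p hp
    simp only [Finset.mem_filter, Finset.mem_product] at hp
    rw [SimpleGraph.mem_neighborFinset]
    exact (hp.2 ▸ hp.1.2).symm
  calc _ ≤ (G.neighborFinset b).card := by
        apply Finset.card_le_card_of_injOn Prod.fst this
        intro p hp q hq hpq
        simp only [Finset.mem_coe, Finset.mem_filter] at hp hq
        exact Prod.ext hpq (hp.2.trans hq.2.symm)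
    _ = G.degree b := rfl

lemma cut_le_vol_compl (S : Finset V) : cut G S ≤ vol G Sᶜ := by
  apply cut_le_vol_of_mem
  intro p hp
  simp only [Finset.mem_filter, Finset.mem_product] at hp
  exact hp.1.2

lemma cut_le_vol (S : Finset V) : cut G S ≤ vol G S := by
  rw [cut]
  have hmem : ∀ p ∈ (S ×ˢ Sᶜ).filter (fun p => G.Adj p.1 p.2), p.1 ∈ S := by
    intro p hp
    simp only [Finset.mem_filter, Finset.mem_product] at hp
    exact hp.1.1
  rw [Finset.card_eq_sum_card_fiberwise hmem]
  apply Finset.sum_le_sum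
  intro a _
  have : ∀ p ∈ (((S ×ˢ Sᶜ).filter fun p => G.Adj p.1 p.2).filter fun p => p.1 = a),
      p.2 ∈ G.neighborFinset a := by
    intro p hp
    simp only [Finset.mem_filter, Finset.mem_product] at hp
    rw [SimpleGraph.mem_neighborFinset]
    exact hp.2 ▸ hp.1.2
  calc _ ≤ (G.neighborFinset a).card := by
        apply Finset.card_le_card_of_injOn Prod.snd this
        intro p hp q hq hpq
        simp only [Finset.mem_coe, Finset.mem_filter] at hp hq
        exact Prod.ext (hp.2.trans hq.2.symm) hpq
    _ = G.degree a := rfl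

lemma conductance_nonneg (S : Finset V) : 0 ≤ conductance G S := by
  unfold conductance
  positivity

lemma conductance_le_one (S : Finset V) : conductance G S ≤ 1 := by
  unfold conductance
  rcases Nat.eq_zero_or_pos (min (vol G S) (vol G Sᶜ)) with h | h
  · rw [h]; norm_num
  · rw [div_le_one (by exact_mod_cast h)]
    exact_mod_cast Nat.le_min.mpr ⟨cut_le_vol G S, cut_le_vol_compl G S⟩
set_option linter.unusedSectionVars false

lemma mem_ball {v u : V} {r : ℕ} : u ∈ ball G v r ↔ G.dist v u ≤ r := by
  simp [ball]

lemma center_mem_ball (v : V) (r : ℕ) : v ∈ ball G v r := by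
  rw [mem_ball, SimpleGraph.dist_self]
  exact Nat.zero_le r

lemma ball_mono (v : V) {r r' : ℕ} (h : r ≤ r') : ball G v r ⊆ ball G v r' := by
  intro u hu
  rw [mem_ball] at hu ⊢
  exact hu.trans h

lemma vol_ball_add_cut_le (hG : G.Connected) (c : V) (r : ℕ) :
    vol G (ball G c r) + cut G (ball G c r) ≤ vol G (ball G c (r + 1)) := by
  have hsub : ball G c r ⊆ ball G c (r + 1) := ball_mono G c (Nat.le_succ r)
  have hcut : cut G (ball G c r) ≤ vol G (ball G c (r + 1) \ ball G c r) := by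
    apply cut_le_vol_of_mem
    intro p hp
    simp only [Finset.mem_filter, Finset.mem_product] at hp
    rw [Finset.mem_sdiff]
    constructor
    · rw [mem_ball]
      have h1 : G.dist c p.1 ≤ r := (mem_ball G).mp hp.1.1
      have h2 : G.dist p.1 p.2 = 1 := SimpleGraph.dist_eq_one_iff_adj.mpr hp.2
      calc G.dist c p.2 ≤ G.dist c p.1 + G.dist p.1 p.2 := hG.dist_triangle
        _ ≤ r + 1 := by omega
    · simpa using hp.1.2
  have hvol : vol G (ball G c (r + 1) \ ball G c r) + vol G (ball G c r)
      = vol G (ball G c (r + 1)) := Finset.sum_sdiff hsub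
  omega

lemma degree_pos (hG : G.Connected) (hn : 2 ≤ Fintype.card V) (v : V) :
    0 < G.degree v := by
  rw [SimpleGraph.degree_pos_iff_exists_adj]
  have : Nontrivial V := Fintype.one_lt_card_iff_nontrivial.mp hn
  obtain ⟨u, hu⟩ := exists_ne v
  obtain ⟨p⟩ := hG v u
  cases p with
  | nil => exact absurd rfl hu.symm
  | cons h q => exact ⟨_, h⟩

lemma vol_univ_le : vol G univ ≤ Fintype.card V * (Fintype.card V - 1) := by
  calc vol G univ ≤ ∑ _v : V, (Fintype.card V - 1) :=
        Finset.sum_le_sum fun v _ => Nat.le_sub_one_of_lt (G.degree_lt_card_verts v)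
    _ = Fintype.card V * (Fintype.card V - 1) := by
        rw [Finset.sum_const, smul_eq_mul, Finset.card_univ]

lemma exp_half_le (φ : ℝ) (h0 : 0 ≤ φ) (h1 : φ ≤ 1) : Real.exp (φ / 2) ≤ 1 + φ := by
  have h2 : (1 : ℝ) - φ / 2 ≤ Real.exp (-(φ / 2)) := by
    have := Real.add_one_le_exp (-(φ / 2)); linarith
  have h3 : 0 < 1 - φ / 2 := by linarith
  have h4 : Real.exp (φ / 2) ≤ 1 / (1 - φ / 2) := by
    rw [le_div_iff₀ h3]
    calc Real.exp (φ / 2) * (1 - φ / 2) ≤ Real.exp (φ / 2) * Real.exp (-(φ / 2)) := by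
          apply mul_le_mul_of_nonneg_left h2 (Real.exp_nonneg _)
      _ = 1 := by rw [← Real.exp_add]; simp
  calc Real.exp (φ / 2) ≤ 1 / (1 - φ / 2) := h4
    _ ≤ 1 + φ := by
        rw [div_le_iff₀ h3]; nlinarith

lemma exists_good_radius (hG : G.Connected) (hn : 2 ≤ Fintype.card V) (c : V) (t : ℕ)
    (φ : ℝ) (hφ0 : 0 ≤ φ) (hφ1 : φ ≤ 1)
    (hsmall : 2 * vol G (ball G c t) ≤ vol G univ)
    (hbig : 4 * Real.log (Fintype.card V) ≤ φ * t) :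
    ∃ r ≤ t, conductance G (ball G c r) ≤ φ := by
  by_contra hcon
  push_neg at hcon
  set n := Fintype.card V with hn_def
  have key : ∀ r ≤ t, (1 + φ) ^ r ≤ (vol G (ball G c r) : ℝ) := by
    intro r
    induction r with
    | zero =>
      intro _
      have hc : c ∈ ball G c 0 := center_mem_ball G c 0
      have : 1 ≤ vol G (ball G c 0) :=
        le_trans (degree_pos G hG hn c)
          (Finset.single_le_sum (f := fun v => G.degree v) (fun v _ => Nat.zero_le _) hc)
      simp only [pow_zero]; exact_mod_cast this
    | succ r ih =>
      intro hr
      have hr' : r ≤ t := Nat.le_of_succ_le hr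
      have h1 := ih hr'
      have hpow : (1 : ℝ) ≤ (1 + φ) ^ r := one_le_pow₀ (by linarith)
      have hvpos : (0 : ℝ) < (vol G (ball G c r) : ℝ) := lt_of_lt_of_le (by linarith) h1
      -- min is vol S
      have hSle : vol G (ball G c r) ≤ vol G (ball G c r)ᶜ := by
        have h2 : 2 * vol G (ball G c r) ≤ vol G univ :=
          le_trans (by have := vol_mono G (ball_mono G c hr'); omega) hsmall
        have h3 := vol_add_compl G (ball G c r)
        omega
      have hmin : min (vol G (ball G c r)) (vol G (ball G c r)ᶜ) = vol G (ball G c r) :=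
        min_eq_left hSle
      have hcond := hcon r hr'
      rw [conductance, hmin] at hcond
      have hcut : φ * (vol G (ball G c r) : ℝ) < (cut G (ball G c r) : ℝ) := by
        rw [lt_div_iff₀ hvpos] at hcond
        linarith [hcond]
      have hstep := vol_ball_add_cut_le G hG c r
      have hstep' : (vol G (ball G c r) : ℝ) + (cut G (ball G c r) : ℝ)
          ≤ (vol G (ball G c (r + 1)) : ℝ) := by exact_mod_cast hstep
      calc (1 + φ) ^ (r + 1) = (1 + φ) ^ r * (1 + φ) := pow_succ _ _
        _ ≤ (vol G (ball G c r) : ℝ) * (1 + φ) := by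
            apply mul_le_mul_of_nonneg_right h1 (by linarith)
        _ = (vol G (ball G c r) : ℝ) + φ * (vol G (ball G c r) : ℝ) := by ring
        _ ≤ (vol G (ball G c (r + 1)) : ℝ) := by linarith
  have hfin := key t le_rfl
  have hn2 : (2 : ℝ) ≤ (n : ℝ) := by exact_mod_cast hn
  have hnpos : (0 : ℝ) < (n : ℝ) := by linarith
  have hexp : Real.exp (2 * Real.log n) = (n : ℝ) ^ 2 := by
    rw [two_mul, Real.exp_add, Real.exp_log hnpos]; ring
  have hpow2 : ((n : ℝ)) ^ 2 ≤ (1 + φ) ^ t := by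
    calc ((n : ℝ)) ^ 2 = Real.exp (2 * Real.log n) := hexp.symm
      _ ≤ Real.exp (φ * t / 2) := Real.exp_le_exp.mpr (by linarith)
      _ = Real.exp (φ / 2) ^ t := by
          rw [← Real.exp_nat_mul]; ring_nf
      _ ≤ (1 + φ) ^ t := pow_le_pow_left₀ (Real.exp_nonneg _) (exp_half_le φ hφ0 hφ1) t
  have hA : ((n : ℝ)) ^ 2 ≤ (vol G (ball G c t) : ℝ) := le_trans hpow2 hfin
  have hB : 2 * (vol G (ball G c t) : ℝ) ≤ (n : ℝ) ^ 2 - n := by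
    have h1 : 2 * vol G (ball G c t) ≤ n * (n - 1) := le_trans hsmall (vol_univ_le G)
    have h2 : (↑(n * (n - 1)) : ℝ) = (n : ℝ) ^ 2 - n := by
      have : 1 ≤ n := by omega
      push_cast [Nat.cast_sub this]; ring
    calc 2 * (vol G (ball G c t) : ℝ) = (↑(2 * vol G (ball G c t)) : ℝ) := by push_cast; ring
      _ ≤ (↑(n * (n - 1)) : ℝ) := by exact_mod_cast h1
      _ = (n : ℝ) ^ 2 - n := h2
  nlinarith [hA, hB, hn2]

lemma dist_getVert_le (hG : G.Connected) {u w : V} (p : G.Walk u w) (j : ℕ) :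
    G.dist u (p.getVert j) ≤ j := by
  induction j with
  | zero => simp [p.getVert_zero, SimpleGraph.dist_self]
  | succ j ih =>
    by_cases hj : j < p.length
    · have hadj : G.Adj (p.getVert j) (p.getVert (j + 1)) := p.adj_getVert_succ hj
      calc G.dist u (p.getVert (j + 1))
          ≤ G.dist u (p.getVert j) + G.dist (p.getVert j) (p.getVert (j + 1)) :=
            hG.dist_triangle
        _ ≤ j + 1 := by
            have := SimpleGraph.dist_eq_one_iff_adj.mpr hadj
            omega
    · have h1 : p.getVert (j + 1) = p.getVert j := by
        rw [p.getVert_of_length_le (by omega), p.getVert_of_length_le (by omega)]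
      rw [h1]
      exact (ih).trans (Nat.le_succ j)

lemma dist_getVert_eq (hG : G.Connected) {u w : V} (p : G.Walk u w)
    (hp : p.length = G.dist u w) (j : ℕ) (hj : j ≤ p.length) :
    G.dist u (p.getVert j) = j := by
  have hub : G.dist u (p.getVert j) ≤ j := dist_getVert_le G hG p j
  have hrev : G.dist w (p.getVert j) ≤ p.length - j := by
    have h1 : p.reverse.getVert (p.length - j) = p.getVert j := by
      rw [p.getVert_reverse]
      congr 1
      omega
    calc G.dist w (p.getVert j) = G.dist w (p.reverse.getVert (p.length - j)) := by rw [h1]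
      _ ≤ p.length - j := dist_getVert_le G hG p.reverse (p.length - j)
  have htri : G.dist u w ≤ G.dist u (p.getVert j) + G.dist (p.getVert j) w :=
    hG.dist_triangle
  rw [SimpleGraph.dist_comm (u := p.getVert j)] at htri
  omega

/-- `φ_k(G) ⬝ diam(G) ≤ 24 k log n`: there are `k` pairwise disjoint nonempty vertex
subsets each of conductance at most `24 k log n / diam(G)`. -/
theorem phiK_diam_le (G : SimpleGraph V) [DecidableRel G.Adj] (hG : G.Connected)
    (hn : 2 ≤ Fintype.card V) (k : ℕ) (hk2 : 2 ≤ k) (hkn : k ≤ Fintype.card V) :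
    phiK G k * G.diam ≤ 24 * k * Real.log (Fintype.card V) ∧
      ∃ S : Fin k → Finset V, (∀ i, (S i).Nonempty) ∧
        Pairwise (Function.onFun Disjoint S) ∧
        ∀ i, conductance G (S i) ≤ 24 * k * Real.log (Fintype.card V) / G.diam := by
  have hne : Nonempty V := Fintype.card_pos_iff.mp (by omega)
  have hnontriv : Nontrivial V := Fintype.one_lt_card_iff_nontrivial.mp hn
  have hediam : G.ediam ≠ ⊤ := by
    obtain ⟨u, v, huv⟩ := SimpleGraph.exists_edist_eq_ediam_of_finite (G := G)
    rw [← huv]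
    exact SimpleGraph.edist_ne_top_iff_reachable.mpr (hG u v)
  have hD0 : G.diam ≠ 0 := by
    intro h
    rcases SimpleGraph.diam_eq_zero.mp h with h' | h'
    · exact hediam h'
    · exact not_subsingleton V h'
  have hD1 : 1 ≤ G.diam := Nat.one_le_iff_ne_zero.mpr hD0
  have hDpos : (0 : ℝ) < (G.diam : ℝ) := by exact_mod_cast hD1
  have hlogpos : 0 < Real.log (Fintype.card V) := Real.log_pos (by exact_mod_cast hn)
  have hkR : (2 : ℝ) ≤ (k : ℝ) := by exact_mod_cast hk2
  set n := Fintype.card V with hndef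
  set B : ℝ := 24 * k * Real.log n / G.diam with hBdef
  have hB0 : 0 < B := by
    apply div_pos _ hDpos
    positivity
  have main : ∃ S : Fin k → Finset V, (∀ i, (S i).Nonempty) ∧
      Pairwise (Function.onFun Disjoint S) ∧ ∀ i, conductance G (S i) ≤ B := by
    by_cases hcase : (G.diam : ℝ) ≤ 24 * k * Real.log n
    · -- trivial case: singletons
      have hB1 : 1 ≤ B := (one_le_div hDpos).mpr hcase
      have he : Function.Injective
          (fun i : Fin k => (Fintype.equivFin V).symm (Fin.castLE hkn i)) := by
        intro i j hij
        exact Fin.castLE_injective hkn ((Fintype.equivFin V).symm.injective hij)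
      refine ⟨fun i => {(Fintype.equivFin V).symm (Fin.castLE hkn i)},
        fun i => Finset.singleton_nonempty _, ?_, fun i => le_trans (conductance_le_one G _) hB1⟩
      intro i j hij
      simp only [Function.onFun, Finset.disjoint_singleton]
      exact he.ne hij
    · -- main case
      push_neg at hcase
      have hφ1 : B < 1 := (div_lt_one hDpos).mpr hcase
      set D := G.diam with hDdef
      have hlog2 : (0.6931 : ℝ) < Real.log 2 := by
        have := Real.log_two_gt_d9
        linarith
      have hlogn2 : Real.log 2 ≤ Real.log n := by
        apply Real.log_le_log (by norm_num)
        exact_mod_cast hn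
      have hDk : (16 * k : ℝ) < (D : ℝ) := by
        nlinarith
      have hD6k : 6 * k ≤ D := by
        have : ((6 * k : ℕ) : ℝ) < (D : ℝ) := by push_cast; nlinarith
        exact_mod_cast this.le
      set t := D / (6 * k) + 1 with htdef
      set s := 2 * t + 1 with hsdef
      have hkpos : 0 < k := by omega
      have h6kpos : 0 < 6 * k := by omega
      have hq1 : 1 ≤ D / (6 * k) := (Nat.one_le_div_iff h6kpos).mpr hD6k
      have h6 : 6 * k * (D / (6 * k)) ≤ D := Nat.mul_div_le D (6 * k)
      have hks : k * s ≤ D := by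
        set q := D / (6 * k) with hqdef
        calc k * s = 2 * (k * q) + 3 * k := by rw [hsdef, htdef]; ring
          _ ≤ 2 * (k * q) + 4 * (k * q) := by
              have : k ≤ k * q := Nat.le_mul_of_pos_right k hq1
              omega
          _ = 6 * k * q := by ring
          _ ≤ D := h6
      have htlb : (D : ℝ) / (6 * k) ≤ (t : ℝ) := by
        rw [div_le_iff₀ (by positivity)]
        have hnat : D ≤ t * (6 * k) := by
          have h1 := Nat.div_add_mod D (6 * k)
          have h2 := Nat.mod_lt D h6kpos
          rw [htdef]
          set q := D / (6 * k)
          calc D = 6 * k * q + D % (6 * k) := h1.symm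
            _ ≤ 6 * k * q + 6 * k := by omega
            _ = (q + 1) * (6 * k) := by ring
        exact_mod_cast hnat
      have hbig : 4 * Real.log n ≤ B * t := by
        have hcalc : (4 : ℝ) * Real.log n = B * ((D : ℝ) / (6 * k)) := by
          rw [hBdef]
          field_simp
          ring
        rw [hcalc]
        exact mul_le_mul_of_nonneg_left htlb hB0.le
      obtain ⟨u, w, huw⟩ := SimpleGraph.exists_dist_eq_diam (G := G)
      obtain ⟨p, hp⟩ := hG.exists_walk_length_eq_dist u w
      have hpD : p.length = D := by rw [hp, huw]
      set c : Fin (k + 1) → V := fun i => p.getVert (i * s) with hcdef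
      have hdist_c : ∀ i : Fin (k + 1), G.dist u (c i) = i * s := by
        intro i
        apply dist_getVert_eq G hG p hp
        rw [hpD]
        calc (i : ℕ) * s ≤ k * s := Nat.mul_le_mul_right s (by omega)
          _ ≤ D := hks
      have hsep0 : ∀ i j : Fin (k + 1), (i : ℕ) < (j : ℕ) → s ≤ G.dist (c i) (c j) := by
        intro i j hij
        have h1 := hdist_c j
        have h2 := hdist_c i
        have htri : G.dist u (c j) ≤ G.dist u (c i) + G.dist (c i) (c j) := hG.dist_triangle
        have hmul : (i : ℕ) * s + s ≤ (j : ℕ) * s := by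
          calc (i : ℕ) * s + s = ((i : ℕ) + 1) * s := by ring
            _ ≤ (j : ℕ) * s := Nat.mul_le_mul_right s (by omega)
        omega
      have hsep : ∀ i j : Fin (k + 1), i ≠ j →
          Disjoint (ball G (c i) t) (ball G (c j) t) := by
        have key : ∀ i j : Fin (k + 1), (i : ℕ) < (j : ℕ) →
            Disjoint (ball G (c i) t) (ball G (c j) t) := by
          intro i j hij
          rw [Finset.disjoint_left]
          intro v hvi hvj
          rw [mem_ball] at hvi hvj
          have htri : G.dist (c i) (c j) ≤ G.dist (c i) v + G.dist v (c j) := hG.dist_triangle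
          rw [SimpleGraph.dist_comm (u := v)] at htri
          have := hsep0 i j hij
          omega
        intro i j hij
        rcases lt_or_gt_of_ne (fun h => hij (Fin.ext h) : (i : ℕ) ≠ (j : ℕ)) with h | h
        · exact key i j h
        · exact (key j i h).symm
      have hPunique : ∀ i j : Fin (k + 1),
          vol G univ < 2 * vol G (ball G (c i) t) →
          vol G univ < 2 * vol G (ball G (c j) t) → i = j := by
        intro i j hi hj
        by_contra hne
        have hdisj := hsep i j hne
        have hsum : vol G (ball G (c i) t) + vol G (ball G (c j) t) ≤ vol G univ := by
          calc vol G (ball G (c i) t) + vol G (ball G (c j) t)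
              = vol G (ball G (c i) t ∪ ball G (c j) t) :=
                (Finset.sum_union hdisj).symm
            _ ≤ vol G univ := vol_mono G (Finset.subset_univ _)
        omega
      have hj0 : ∃ j0 : Fin (k + 1), ∀ i, i ≠ j0 →
          2 * vol G (ball G (c i) t) ≤ vol G univ := by
        by_cases h : ∃ i, vol G univ < 2 * vol G (ball G (c i) t)
        · obtain ⟨j0, hj0⟩ := h
          refine ⟨j0, fun i hi => ?_⟩
          by_contra hPi
          exact hi (hPunique i j0 (by omega) hj0)
        · push_neg at h
          exact ⟨0, fun i _ => h i⟩
      obtain ⟨j0, hgood⟩ := hj0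
      have hchoice : ∀ i : Fin k, ∃ r ≤ t,
          conductance G (ball G (c (j0.succAbove i)) r) ≤ B := by
        intro i
        exact exists_good_radius G hG hn _ t B hB0.le hφ1.le
          (hgood _ (Fin.succAbove_ne j0 i)) hbig
      choose r hrt hrc using hchoice
      refine ⟨fun i => ball G (c (j0.succAbove i)) (r i),
        fun i => ⟨_, center_mem_ball G _ _⟩, ?_, hrc⟩
      intro i j hij
      have hne : j0.succAbove i ≠ j0.succAbove j := fun h => hij (Fin.succAbove_right_injective h)
      exact (hsep _ _ hne).mono (ball_mono G _ (hrt i)) (ball_mono G _ (hrt j))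
  obtain ⟨S, hS1, hS2, hS3⟩ := main
  have hbdd : BddBelow {x | ∃ S : Fin k → Finset V, (∀ i, (S i).Nonempty) ∧
      Pairwise (Function.onFun Disjoint S) ∧ x = ⨆ i, conductance G (S i)} := by
    refine ⟨0, fun x hx => ?_⟩
    obtain ⟨S', _, _, h3⟩ := hx
    rw [h3]
    exact Real.iSup_nonneg fun i => conductance_nonneg G _
  have hk_ne : Nonempty (Fin k) := ⟨⟨0, by omega⟩⟩
  have h1 : phiK G k ≤ ⨆ i, conductance G (S i) := csInf_le hbdd ⟨S, hS1, hS2, rfl⟩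
  have h2 : (⨆ i, conductance G (S i)) ≤ B := ciSup_le hS3
  refine ⟨?_, S, hS1, hS2, hS3⟩
  calc phiK G k * G.diam ≤ B * G.diam :=
        mul_le_mul_of_nonneg_right (h1.trans h2) hDpos.le
    _ = 24 * k * Real.log n := div_mul_cancel₀ _ (ne_of_gt hDpos)
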